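/- Let D be a strongly connected orientation of a finite undirected graph G = (V, E), let v be a vertex, and let U be the set of vertices that two-reach v in D (where u two-reaches v means there are two arc-disjoint directed paths from u to v; in particular v ∈ U). Then every connected component C of the induced undirected subgraph G[V ∖ U] has exactly one arc of D from C into U, i.e., there is exactly one arc of D whose tail lies in C and whose head lies in U. -/

import Mathlib

/-- An orientation of an undirected simple graph `G`: each edge is assigned
exactly one direction, giving the arc relation `arc`. -/
structure GraphOrientation {V : Type*} (G : SimpleGraph V) where
  arc : V → V → Prop
  adj_iff : ∀ u v, G.Adj u v ↔ (arc u v ∨ arc v u)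
  asymm : ∀ u v, arc u v → ¬ arc v u

/-- The indegree of a vertex in an orientation. -/
noncomputable def indeg {V : Type*} {G : SimpleGraph V} (D : GraphOrientation G) (v : V) : ℕ :=
  {u | D.arc u v}.ncard

/-- The list of consecutive arcs of a path given as a list of vertices. -/
def pathArcs {V : Type*} (p : List V) : List (V × V) := p.zip p.tail

/-- The list of arcs of a cycle given as a list of (distinct) vertices,
including the closing arc from the last vertex back to the first. -/
def cycleArcs {V : Type*} (p : List V) : List (V × V) := p.zip (p.rotate 1)

/-- `p` is a (simple) directed path from `u` to `v` with respect to the arc relation `A`. -/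
def IsDipath {V : Type*} (A : V → V → Prop) (p : List V) (u v : V) : Prop :=
  p.head? = some u ∧ p.getLast? = some v ∧ p.Nodup ∧ p.Chain' A

/-- `D'` is obtained from `D` by reversing exactly the arcs in the list `A`
(all of which must be arcs of `D`). -/
def ReversalAlong {V : Type*} {G : SimpleGraph V} (D D' : GraphOrientation G)
    (A : List (V × V)) : Prop :=
  (∀ a ∈ A, D.arc a.1 a.2) ∧ ∀ u v, D'.arc u v ↔ ((D.arc u v ∧ (u, v) ∉ A) ∨ (v, u) ∈ A)

/-- `D'` is obtained from `D` by reversing every arc of some directed cycle. -/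
def CycleReversal {V : Type*} {G : SimpleGraph V} (D D' : GraphOrientation G) : Prop :=
  ∃ p : List V, p ≠ [] ∧ p.Nodup ∧ ReversalAlong D D' (cycleArcs p)

/-- `D'` is obtained from `D` by a weak reversal: reversing a directed path
from `u` to `v` where `δ(u) = δ(v) - 1`. -/
def WeakReversal {V : Type*} {G : SimpleGraph V} (D D' : GraphOrientation G) : Prop :=
  ∃ (p : List V) (u v : V), IsDipath D.arc p u v ∧ indeg D u + 1 = indeg D v ∧
    ReversalAlong D D' (pathArcs p)

/-- `D` contains no reversible path, i.e. no directed path from `u` to `v`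
with `δ(u) < δ(v) - 1`. -/
def NoReversiblePath {V : Type*} {G : SimpleGraph V} (D : GraphOrientation G) : Prop :=
  ∀ u v : V, Relation.ReflTransGen D.arc u v → indeg D v ≤ indeg D u + 1

/-- The indegree sequence of an orientation, sorted in decreasing order. -/
noncomputable def degSeq {V : Type*} [Fintype V] {G : SimpleGraph V}
    (D : GraphOrientation G) : List ℕ :=
  ((Finset.univ.val.map (indeg D)).sort (· ≤ ·)).reverse

/-- Lexicographic (non-strict) comparison of lists of naturals. -/
def lexLE (l₁ l₂ : List ℕ) : Prop := l₁ = l₂ ∨ List.Lex (· < ·) l₁ l₂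

/-- `u` two-reaches `v`: there are two arc-disjoint directed paths from `u` to `v`. -/
def TwoReaches {V : Type*} (A : V → V → Prop) (u v : V) : Prop :=
  ∃ p q : List V, IsDipath A p u v ∧ IsDipath A q u v ∧ ∀ a ∈ pathArcs p, a ∉ pathArcs q

/-- Reachability inside the induced subgraph `G[U]`. -/
def ReachIn {V : Type*} (G : SimpleGraph V) (U : Set V) (x y : V) : Prop :=
  Relation.ReflTransGen (fun a b => a ∈ U ∧ b ∈ U ∧ G.Adj a b) x y

/-- `C` is a connected component of the induced undirected subgraph `G[U]`. -/
def IsCompOf {V : Type*} (G : SimpleGraph V) (U C : Set V) : Prop :=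
  ∃ x ∈ U, C = {y | ReachIn G U x y}


namespace StmtAux
open Relation
attribute [local instance] Classical.propDecidable
set_option linter.unusedSectionVars false
variable {V : Type*} [Fintype V]

theorem pathArcs_cons_cons (a b : V) (l : List V) :
    pathArcs (a :: b :: l) = (a, b) :: pathArcs (b :: l) := rfl

theorem chain'_iff_pathArcs {A : V → V → Prop} (l : List V) :
    l.Chain' A ↔ ∀ e ∈ pathArcs l, A e.1 e.2 := by
  induction l with
  | nil => simp [pathArcs, List.Chain']
  | cons a l ih =>
    cases l with
    | nil => simp [pathArcs, List.Chain']
    | cons b l' =>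
      show List.IsChain A (a :: b :: l') ↔ _
      rw [List.isChain_cons_cons, pathArcs_cons_cons, show List.IsChain A (b :: l') ↔ _ from ih]
      simp only [List.mem_cons, forall_eq_or_imp]

theorem mem_of_mem_pathArcs {l : List V} {e : V × V} (h : e ∈ pathArcs l) :
    e.1 ∈ l ∧ e.2 ∈ l := by
  obtain ⟨a, b⟩ := e
  have := List.of_mem_zip h
  exact ⟨this.1, List.mem_of_mem_tail this.2⟩

theorem pathArcs_suffix {m l : List V} (h : m.IsSuffix l) {e : V × V}
    (he : e ∈ pathArcs m) : e ∈ pathArcs l := by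
  obtain ⟨p, rfl⟩ := h
  induction p with
  | nil => simpa using he
  | cons c p ih =>
    cases hp : p ++ m with
    | nil => simp [hp] at ih ⊢; rw [List.append_eq_nil_iff] at hp; simp [hp.2] at he; simp [pathArcs] at he
    | cons d t =>
      have : pathArcs (c :: p ++ m) = (c, d) :: pathArcs (p ++ m) := by
        simp only [List.cons_append, hp, pathArcs_cons_cons]
      rw [this]
      exact List.mem_cons_of_mem _ (by rw [hp] at ih ⊢; exact ih)

theorem dedupWalk : ∀ (n : ℕ) (l : List V), l.length ≤ n → ∀ {x y : V},
    l.head? = some x → l.getLast? = some y →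
    ∃ m : List V, m.head? = some x ∧ m.getLast? = some y ∧ m.Nodup ∧
      (∀ e ∈ pathArcs m, e ∈ pathArcs l) ∧ ∀ u ∈ m, u ∈ l := by
  intro n
  induction n with
  | zero => intro l hl x y hh _; cases l <;> simp_all
  | succ n ih =>
    intro l hl x y hh hlast
    match l, hh with
    | a :: rest, hh =>
      have hax : a = x := by simpa using hh
      subst hax
      by_cases hmem : a ∈ rest
      · -- cut to the last ... use first occurrence decomposition
        obtain ⟨r1, r2, hr⟩ := List.append_of_mem hmem
        have hsuf : (a :: r2).IsSuffix (a :: rest) := by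
          refine ⟨a :: r1, ?_⟩
          simp [hr]
        have hlen : (a :: r2).length ≤ n := by
          have := hl
          simp [hr, List.length_append] at this ⊢
          omega
        have hlast2 : (a :: r2).getLast? = some y := by
          have heq : (a :: rest) = (a :: r1) ++ (a :: r2) := by simp [hr]
          rw [heq, List.getLast?_append_of_ne_nil _ (by simp)] at hlast
          exact hlast
        obtain ⟨m, h1, h2, h3, h4, h5⟩ := ih (a :: r2) hlen (x := a) rfl hlast2
        exact ⟨m, h1, h2, h3, fun e he => pathArcs_suffix hsuf (h4 e he),
          fun u hu => hsuf.subset (h5 u hu)⟩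
      · cases rest with
        | nil =>
          refine ⟨[a], by simp, by simpa using hlast, by simp, by simp, by simp⟩
        | cons b rest' =>
          have hlast' : (b :: rest').getLast? = some y := by
            rw [List.getLast?_cons_cons] at hlast; exact hlast
          obtain ⟨m, h1, h2, h3, h4, h5⟩ := ih (b :: rest') (by simp at hl ⊢; omega)
            (x := b) (by simp) hlast'
          match m, h1 with
          | c :: m', h1 =>
            have hbc : c = b := by simpa using h1
            subst hbc
            refine ⟨a :: c :: m', by simp, by
              rw [List.getLast?_cons_cons]; exact h2, ?_, ?_, ?_⟩
            · refine List.nodup_cons.mpr ⟨fun hmm => hmem (h5 a hmm), h3⟩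
            · intro e he
              rw [pathArcs_cons_cons] at he
              rcases List.mem_cons.mp he with rfl | he'
              · exact List.mem_cons_self
              · exact List.mem_cons_of_mem _ (h4 e he')
            · intro u hu
              rcases List.mem_cons.mp hu with rfl | hu'
              · exact List.mem_cons_self
              · exact List.mem_cons_of_mem _ (h5 u hu')

theorem listOfReach {A : V → V → Prop} {x y : V} (h : ReflTransGen A x y) :
    ∃ l : List V, l.head? = some x ∧ l.getLast? = some y ∧ l.Chain' A := by
  induction h with
  | refl => exact ⟨[x], rfl, rfl, List.isChain_singleton x⟩
  | tail _ hbc ih =>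
    obtain ⟨l, h1, h2, h3⟩ := ih
    rename_i b c _
    have hne : l ≠ [] := by rintro rfl; simp at h1
    refine ⟨l ++ [c], ?_, ?_, ?_⟩
    · rwa [List.head?_append_of_ne_nil _ hne]
    · rw [List.getLast?_append_of_ne_nil _ (by simp)]; rfl
    · show List.IsChain A (l ++ [c])
      rw [List.isChain_append]
      exact ⟨h3, List.isChain_singleton c, fun p hp q hq => by
        simp at hq; subst hq
        rw [h2] at hp; simp at hp; subst hp; exact hbc⟩

theorem dipathOfReach {A : V → V → Prop} {x y : V} (h : ReflTransGen A x y) :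
    ∃ l : List V, IsDipath A l x y := by
  obtain ⟨l, h1, h2, h3⟩ := listOfReach h
  obtain ⟨m, m1, m2, m3, m4, _⟩ := dedupWalk l.length l le_rfl h1 h2
  refine ⟨m, m1, m2, m3, (chain'_iff_pathArcs m).mpr fun e he =>
    (chain'_iff_pathArcs l).mp h3 e (m4 e he)⟩

theorem reachOfChain {A : V → V → Prop} : ∀ (l : List V) {x y : V},
    l.head? = some x → l.getLast? = some y → l.Chain' A → ReflTransGen A x y := by
  intro l
  induction l with
  | nil => intro x y h; simp at h
  | cons a rest ih =>
    intro x y hh hl hc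
    have hax : a = x := by simpa using hh
    subst hax
    cases rest with
    | nil =>
      obtain rfl : a = y := by simpa using hl
      exact ReflTransGen.refl
    | cons b rest' =>
      change List.IsChain A (a :: b :: rest') at hc
      rw [List.isChain_cons_cons] at hc
      exact ReflTransGen.head hc.1 (ih (by simp) (by rwa [List.getLast?_cons_cons] at hl) hc.2)

theorem cross {B : V → V → Prop} {X : Set V} {z y : V} (h : ReflTransGen B z y)
    (hz : z ∈ X) (hy : y ∉ X) : ∃ s t, B s t ∧ s ∈ X ∧ t ∉ X := by
  induction h with
  | refl => exact absurd hz hy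
  | @tail m c hzm hmc ih =>
    by_cases hm : m ∈ X
    · exact ⟨m, c, hmc, hm, hy⟩
    · exact ih hm

theorem reachClosed {B : V → V → Prop} {X : Set V}
    (hcl : ∀ s t, s ∈ X → B s t → t ∈ X) {z y : V} (h : ReflTransGen B z y)
    (hz : z ∈ X) : y ∈ X := by
  induction h with
  | refl => exact hz
  | tail _ hmy ih => exact hcl _ _ ih hmy

theorem firstUse {A : V → V → Prop} {f : V × V} {v z' z : V}
    (hz : ¬ ReflTransGen (fun a b => A a b ∧ (a, b) ≠ f) z v) :
    ∀ w, ReflTransGen (fun a b => A a b ∧ (a, b) ≠ f) w v →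
      ReflTransGen (fun a b => (A a b ∧ (a, b) ≠ f) ∧ (a, b) ≠ (z', z)) w v := by
  intro w h
  induction h using ReflTransGen.head_induction_on with
  | refl => exact ReflTransGen.refl
  | head hab hbv ih =>
    rename_i a b
    by_cases he : (a, b) = (z', z)
    · exact absurd (by rwa [(Prod.mk.injEq .. ▸ he : a = z' ∧ b = z).2] at hbv) hz
    · exact ReflTransGen.head ⟨hab, he⟩ ih

theorem exists_cross_list {S : Set V} : ∀ (l : List V) {x y : V},
    l.head? = some x → l.getLast? = some y → x ∈ S → y ∉ S →
    ∃ e ∈ pathArcs l, e.1 ∈ S ∧ e.2 ∉ S := by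
  intro l
  induction l with
  | nil => intro x y h; simp at h
  | cons a rest ih =>
    intro x y hh hl hx hy
    have hax : a = x := by simpa using hh
    subst hax
    cases rest with
    | nil =>
      obtain rfl : a = y := by simpa using hl
      exact absurd hx hy
    | cons b rest' =>
      by_cases hb : b ∈ S
      · obtain ⟨e, he, h1, h2⟩ := ih (x := b) (by simp)
          (by rwa [List.getLast?_cons_cons] at hl) hb hy
        exact ⟨e, by rw [pathArcs_cons_cons]; exact List.mem_cons_of_mem _ he, h1, h2⟩
      · exact ⟨(a, b), by rw [pathArcs_cons_cons]; exact List.mem_cons_self, hx, hb⟩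

theorem allOut {S : Set V} : ∀ (l : List V) {x : V},
    (∀ e ∈ pathArcs l, e.1 ∉ S → e.2 ∉ S) → l.head? = some x → x ∉ S →
    ∀ u ∈ l, u ∉ S := by
  intro l
  induction l with
  | nil => intro x _ h; simp at h
  | cons a rest ih =>
    intro x hmono hh hx u hu
    have hax : a = x := by simpa using hh
    subst hax
    cases rest with
    | nil => simp at hu; subst hu; exact hx
    | cons b rest' =>
      have hb : b ∉ S := hmono (a, b) (by rw [pathArcs_cons_cons]; exact List.mem_cons_self) hx
      rcases List.mem_cons.mp hu with rfl | hu'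
      · exact hx
      · exact ih (x := b) (fun e he => hmono e
          (by rw [pathArcs_cons_cons]; exact List.mem_cons_of_mem _ he)) (by simp) hb u hu'

theorem cross_unique {S : Set V} : ∀ (l : List V),
    (∀ e ∈ pathArcs l, e.1 ∉ S → e.2 ∉ S) →
    ∀ {e f : V × V}, e ∈ pathArcs l → f ∈ pathArcs l →
    e.1 ∈ S → e.2 ∉ S → f.1 ∈ S → f.2 ∉ S → e = f := by
  intro l
  induction l with
  | nil => intro _ e f he; simp [pathArcs] at he
  | cons a rest ih =>
    intro hmono e f he hf he1 he2 hf1 hf2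
    cases rest with
    | nil => simp [pathArcs] at he
    | cons b rest' =>
      rw [pathArcs_cons_cons] at he hf
      have hmono' : ∀ e ∈ pathArcs (b :: rest'), e.1 ∉ S → e.2 ∉ S := fun e he =>
        hmono e (by rw [pathArcs_cons_cons]; exact List.mem_cons_of_mem _ he)
      rcases List.mem_cons.mp he with rfl | he' <;> rcases List.mem_cons.mp hf with rfl | hf'
      · rfl
      · exact absurd hf1 (allOut (b :: rest') hmono' (by simp) he2 f.1
          (mem_of_mem_pathArcs hf').1)
      · exact absurd he1 (allOut (b :: rest') hmono' (by simp) hf2 e.1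
          (mem_of_mem_pathArcs he').1)
      · exact ih hmono' he' hf' he1 he2 hf1 hf2

noncomputable def balZ (F : Set (V × V)) (w : V) : ℤ :=
  ({t | (w, t) ∈ F}.ncard : ℤ) - ({u | (u, w) ∈ F}.ncard : ℤ)

theorem balZ_congr {F G : Set (V × V)} (h : F = G) : balZ F = balZ G := by rw [h]

theorem balZ_empty (w : V) : balZ (∅ : Set (V × V)) w = 0 := by
  simp [balZ]

theorem balZ_insert {F : Set (V × V)} {a b : V} (hab : a ≠ b) (hF : (a, b) ∉ F) (w : V) :
    balZ (insert (a, b) F) w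
      = balZ F w + (if w = a then 1 else 0) - (if w = b then 1 else 0) := by
  have hout : {t | (w, t) ∈ insert (a, b) F}
      = if w = a then insert b {t | (w, t) ∈ F} else {t | (w, t) ∈ F} := by
    split_ifs with h
    · subst h; ext t; simp [Set.mem_insert_iff, Prod.ext_iff]
    · ext t; simp [Prod.ext_iff, h]
  have hin : {u | (u, w) ∈ insert (a, b) F}
      = if w = b then insert a {u | (u, w) ∈ F} else {u | (u, w) ∈ F} := by
    split_ifs with h
    · subst h; ext u; simp [Set.mem_insert_iff, Prod.ext_iff]
    · ext u; simp [Prod.ext_iff, h]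
  unfold balZ
  rw [hout, hin]
  split_ifs with h1 h2 h2
  · exact absurd (h1 ▸ h2 : a = b) hab
  · rw [Set.ncard_insert_of_notMem (fun hb => hF (by subst h1; exact hb)) (Set.toFinite _)]
    push_cast; ring
  · rw [Set.ncard_insert_of_notMem (fun ha => hF (by subst h2; exact ha)) (Set.toFinite _)]
    push_cast; ring
  · ring

theorem balZ_diff_singleton {F : Set (V × V)} {a b : V} (hab : a ≠ b) (hF : (a, b) ∈ F)
    (w : V) :
    balZ (F \ {(a, b)}) w
      = balZ F w - (if w = a then 1 else 0) + (if w = b then 1 else 0) := by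
  have h1 : F = insert (a, b) (F \ {(a, b)}) := by
    rw [Set.insert_diff_singleton, Set.insert_eq_self.mpr hF]
  have h2 : (a, b) ∉ F \ {(a, b)} := by simp
  have := balZ_insert hab h2 w
  rw [← h1] at this
  rw [this]; ring

theorem balZ_union {F G : Set (V × V)} (h : Disjoint F G) (w : V) :
    balZ (F ∪ G) w = balZ F w + balZ G w := by
  unfold balZ
  have hout : {t | (w, t) ∈ F ∪ G} = {t | (w, t) ∈ F} ∪ {t | (w, t) ∈ G} := rfl
  have hin : {u | (u, w) ∈ F ∪ G} = {u | (u, w) ∈ F} ∪ {u | (u, w) ∈ G} := rfl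
  rw [hout, hin, Set.ncard_union_eq ?d1 (Set.toFinite _) (Set.toFinite _),
    Set.ncard_union_eq ?d2 (Set.toFinite _) (Set.toFinite _)]
  · push_cast; ring
  case d1 =>
    rw [Set.disjoint_left] at h ⊢
    exact fun t ht ht' => h ht ht'
  case d2 =>
    rw [Set.disjoint_left] at h ⊢
    exact fun u hu hu' => h hu hu'

theorem balZ_diff_subset {F X : Set (V × V)} (h : X ⊆ F) (w : V) :
    balZ (F \ X) w = balZ F w - balZ X w := by
  have : F = (F \ X) ∪ X := by
    rw [Set.diff_union_self, Set.union_eq_self_of_subset_right h]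
  rw [balZ_congr this, balZ_union (Set.disjoint_sdiff_left) w]
  ring

theorem balZ_rev (F : Set (V × V)) (w : V) :
    balZ {e | (e.2, e.1) ∈ F} w = - balZ F w := by
  unfold balZ
  have h1 : {t | (w, t) ∈ {e : V × V | (e.2, e.1) ∈ F}} = {t | (t, w) ∈ F} := rfl
  have h2 : {u | (u, w) ∈ {e : V × V | (e.2, e.1) ∈ F}} = {u | (w, u) ∈ F} := rfl
  rw [h1, h2]; ring

/-- The balance of the arc set of a nontrivial nodup path. -/
theorem pathBal : ∀ (l : List V), l.Nodup → ∀ {s t : V}, l.head? = some s →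
    l.getLast? = some t → s ≠ t → ∀ w,
    balZ {e | e ∈ pathArcs l} w = (if w = s then 1 else 0) - (if w = t then 1 else 0) := by
  intro l
  induction l with
  | nil => intro _ s t h; simp at h
  | cons a rest ih =>
    intro hnd s t hh hl hst w
    obtain rfl : a = s := by simpa using hh
    cases rest with
    | nil =>
      obtain rfl : a = t := by simpa using hl
      exact absurd rfl hst
    | cons b rest' =>
      have hanb : a ∉ b :: rest' := (List.nodup_cons.mp hnd).1
      have hset : {e | e ∈ pathArcs (a :: b :: rest')}
          = insert (a, b) {e | e ∈ pathArcs (b :: rest')} := by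
        ext e; rw [pathArcs_cons_cons]; simp [Set.mem_insert_iff]
      have hab : a ≠ b := fun h => hanb (h ▸ List.mem_cons_self)
      have habF : (a, b) ∉ {e | e ∈ pathArcs (b :: rest')} := fun h =>
        hanb (mem_of_mem_pathArcs h).1
      rw [balZ_congr hset, balZ_insert hab habF w]
      have hlt : (b :: rest').getLast? = some t := by
        rwa [List.getLast?_cons_cons] at hl
      cases rest' with
      | nil =>
        have hbt : b = t := by simpa using hlt
        have hpe : {e | e ∈ pathArcs [b]} = (∅ : Set (V × V)) := by simp [pathArcs]
        rw [balZ_congr hpe, balZ_empty, hbt]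
        ring
      | cons c rest'' =>
        have htmem : t ∈ b :: c :: rest'' := List.mem_of_mem_getLast? (Option.mem_def.mpr hlt)
        have hat : a ≠ t := fun h => hanb (h ▸ htmem)
        have hbt : b ≠ t := by
          intro h
          have h2 : (b :: c :: rest'').getLast? = some t := hlt
          rw [List.getLast?_cons_cons] at h2
          have : t ∈ c :: rest'' := List.mem_of_mem_getLast? (Option.mem_def.mpr h2)
          exact (List.nodup_cons.mp (List.nodup_cons.mp hnd).2).1 (h ▸ this)
        rw [ih (List.nodup_cons.mp hnd).2 (by simp) hlt hbt w]
        split_ifs <;> simp_all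

theorem extractWalk {Arc : V → V → Prop} (hirr : ∀ a, ¬ Arc a a) (v : V) :
    ∀ (n : ℕ) (F : Set (V × V)), F.ncard ≤ n → (∀ e ∈ F, Arc e.1 e.2) →
    ∀ z, (z ≠ v → 1 ≤ balZ F z) → (∀ w, w ≠ z → w ≠ v → 0 ≤ balZ F w) →
    ∃ l : List V, l.head? = some z ∧ l.getLast? = some v ∧
      (∀ e ∈ pathArcs l, e ∈ F) ∧
      ∀ w, balZ (F \ {e | e ∈ pathArcs l}) w
          = balZ F w - (if w = z then 1 else 0) + (if w = v then 1 else 0) := by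
  intro n
  induction n with
  | zero =>
    intro F hcard hF z hz hw
    by_cases hzv : z = v
    · subst hzv
      refine ⟨[z], rfl, rfl, by simp [pathArcs], fun w => ?_⟩
      have : {e : V × V | e ∈ pathArcs [z]} = ∅ := by simp [pathArcs]
      rw [balZ_congr (by rw [this, Set.diff_empty] : F \ {e : V × V | e ∈ pathArcs [z]} = F)]
      ring
    · exfalso
      have h1 : 1 ≤ balZ F z := hz hzv
      have h0 : F.ncard = 0 := Nat.le_zero.mp hcard
      have : F = ∅ := (Set.ncard_eq_zero (Set.toFinite F)).mp h0
      subst this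
      simp [balZ] at h1
  | succ n ih =>
    intro F hcard hF z hz hw
    by_cases hzv : z = v
    · subst hzv
      refine ⟨[z], rfl, rfl, by simp [pathArcs], fun w => ?_⟩
      have : {e : V × V | e ∈ pathArcs [z]} = ∅ := by simp [pathArcs]
      rw [balZ_congr (by rw [this, Set.diff_empty] : F \ {e : V × V | e ∈ pathArcs [z]} = F)]
      ring
    · have h1 : 1 ≤ balZ F z := hz hzv
      have hne : {t | (z, t) ∈ F}.Nonempty := by
        by_contra hemp
        rw [Set.not_nonempty_iff_eq_empty] at hemp
        unfold balZ at h1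
        rw [hemp] at h1
        simp at h1
        omega
      obtain ⟨y, hy⟩ := hne
      have hzy : z ≠ y := fun h => hirr z (by
        have := hF (z, y) hy; simpa [← h] using this)
      set F' := F \ {(z, y)} with hF'
      have hbal' : ∀ w, balZ F' w
          = balZ F w - (if w = z then 1 else 0) + (if w = y then 1 else 0) :=
        fun w => balZ_diff_singleton hzy hy w
      have hsub : F' ⊆ F := Set.diff_subset
      have hcard' : F'.ncard ≤ n := by
        have : F'.ncard < F.ncard := Set.ncard_diff_singleton_lt_of_mem hy (Set.toFinite F)
        omega
      obtain ⟨l', hh', hl', harcs', hbal''⟩ := ih F' hcard' (fun e he => hF e (hsub he)) y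
        (fun hyv => by
          rw [hbal' y, if_neg (fun h : y = z => hzy h.symm), if_pos rfl]
          have := hw y (fun h => hzy h.symm) hyv
          omega)
        (fun w hwy hwv => by
          rw [hbal' w]
          by_cases hwz : w = z
          · subst hwz
            rw [if_pos rfl, if_neg hwy]
            omega
          · rw [if_neg hwz, if_neg hwy]
            have := hw w hwz hwv
            omega)
      -- l' starts with y
      match l', hh' with
      | b :: l'', hh' =>
        obtain rfl : b = y := by simpa using hh'
        refine ⟨z :: b :: l'', rfl, by rw [List.getLast?_cons_cons]; exact hl', ?_, ?_⟩
        · intro e he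
          rw [pathArcs_cons_cons] at he
          rcases List.mem_cons.mp he with rfl | he'
          · exact hy
          · exact hsub (harcs' e he')
        · intro w
          have hset : F \ {e | e ∈ pathArcs (z :: b :: l'')}
              = F' \ {e | e ∈ pathArcs (b :: l'')} := by
            ext e
            rw [hF']
            simp only [Set.mem_diff, Set.mem_setOf_eq, Set.mem_singleton_iff]
            constructor
            · rintro ⟨heF, hne⟩
              refine ⟨⟨heF, fun h => hne ?_⟩, fun h => hne ?_⟩
              · rw [pathArcs_cons_cons]; exact h ▸ List.mem_cons_self
              · rw [pathArcs_cons_cons]; exact List.mem_cons_of_mem _ h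
            · rintro ⟨⟨heF, hne1⟩, hne2⟩
              refine ⟨heF, fun h => ?_⟩
              rw [pathArcs_cons_cons] at h
              rcases List.mem_cons.mp h with h | h
              · exact hne1 h
              · exact hne2 h
          rw [balZ_congr hset, hbal'' w, hbal' w]
          ring

theorem hardMenger {Arc : V → V → Prop} (hasymm : ∀ a b, Arc a b → ¬ Arc b a)
    (hirr : ∀ a, ¬ Arc a a) {x v : V}
    (h : ∀ f : V × V, ReflTransGen (fun a b => Arc a b ∧ (a, b) ≠ f) x v) :
    TwoReaches Arc x v := by
  by_cases hxv : x = v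
  · subst hxv
    exact ⟨[x], [x], ⟨rfl, rfl, by simp, by simp [List.Chain']⟩, ⟨rfl, rfl, by simp, by simp [List.Chain']⟩,
      by simp [pathArcs]⟩
  -- a first dipath P
  obtain ⟨P, hPh, hPl, hPnd, hPc⟩ := dipathOfReach
    (ReflTransGen.mono (r := fun a b => Arc a b ∧ (a, b) ≠ (v, v)) (p := Arc) (fun a b hab => hab.1) _ _ (h ((v, v))))
  set AP : Set (V × V) := {e | e ∈ pathArcs P} with hAP
  have hAParc : ∀ e ∈ AP, Arc e.1 e.2 := fun e he => (chain'_iff_pathArcs P).mp hPc e he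
  -- residual relation
  set R : V → V → Prop := fun a b => (Arc a b ∧ (a, b) ∉ pathArcs P) ∨ (b, a) ∈ pathArcs P
    with hR
  by_cases hres : ReflTransGen R x v
  · -- augmenting case
    obtain ⟨Q, hQh, hQl, hQnd, hQc⟩ := dipathOfReach hres
    set AQ : Set (V × V) := {e | e ∈ pathArcs Q} with hAQ
    have hQR : ∀ e ∈ AQ, R e.1 e.2 := fun e he => (chain'_iff_pathArcs Q).mp hQc e he
    set X : Set (V × V) := AP ∩ {e | (e.2, e.1) ∈ AQ} with hX
    set QF : Set (V × V) := AQ ∩ {e | Arc e.1 e.2} with hQF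
    set QB : Set (V × V) := AQ ∩ {e | (e.2, e.1) ∈ AP} with hQB
    have hQFAP : ∀ e ∈ QF, e ∉ AP := by
      rintro e ⟨heQ, heA⟩ heP
      rcases hQR e heQ with ⟨_, hnp⟩ | hrev
      · exact hnp heP
      · exact hasymm e.2 e.1 (hAParc (e.2, e.1) hrev) heA
    have hQFQB : Disjoint QF QB := by
      rw [Set.disjoint_left]
      rintro e ⟨heQ, heA⟩ ⟨_, hrev⟩
      exact hasymm e.2 e.1 (hAParc (e.2, e.1) hrev) heA
    have hQsplit : AQ = QF ∪ QB := by
      ext e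
      constructor
      · intro he
        rcases hQR e he with ⟨hA, _⟩ | hrev
        · exact Or.inl ⟨he, hA⟩
        · exact Or.inr ⟨he, hrev⟩
      · rintro (⟨he, _⟩ | ⟨he, _⟩) <;> exact he
    have hQBX : QB = {e | (e.2, e.1) ∈ X} := by
      ext ⟨a, b⟩
      simp only [hQB, hX, Set.mem_inter_iff, Set.mem_setOf_eq]
      tauto
    set F : Set (V × V) := (AP \ X) ∪ QF with hFdef
    have hFarc : ∀ e ∈ F, Arc e.1 e.2 := by
      rintro e (⟨heP, _⟩ | ⟨_, heA⟩)
      · exact hAParc e heP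
      · exact heA
    have hXP : X ⊆ AP := Set.inter_subset_left
    have hbalF : ∀ w, balZ F w = balZ AP w + balZ AQ w := by
      intro w
      have h1 : balZ F w = balZ (AP \ X) w + balZ QF w := by
        apply balZ_union
        rw [Set.disjoint_left]
        intro e he heQ
        exact hQFAP e heQ he.1
      have h2 : balZ (AP \ X) w = balZ AP w - balZ X w := balZ_diff_subset hXP w
      have h3 : balZ AQ w = balZ QF w + balZ QB w := by
        rw [balZ_congr hQsplit]; exact balZ_union hQFQB w
      have h4 : balZ QB w = - balZ X w := by
        rw [balZ_congr hQBX]; exact balZ_rev X w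
      rw [h1, h2, h3, h4]; ring
    have hbalP := pathBal P hPnd hPh hPl hxv
    have hbalQ := pathBal Q hQnd hQh hQl hxv
    have hbalF' : ∀ w, balZ F w
        = 2 * (if w = x then 1 else 0) - 2 * (if w = v then 1 else 0) := by
      intro w
      rw [hbalF w, hAP, hAQ, hbalQ w, hbalP w]
      ring
    -- first walk
    obtain ⟨l₁, h1h, h1l, h1arcs, h1bal⟩ := extractWalk hirr v F.ncard F le_rfl hFarc x
      (fun _ => by rw [hbalF' x, if_pos rfl, if_neg hxv]; norm_num)
      (fun w hwx hwv => by rw [hbalF' w, if_neg hwx, if_neg hwv]; norm_num)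
    set F₂ : Set (V × V) := F \ {e | e ∈ pathArcs l₁} with hF₂
    have hbalF₂ : ∀ w, balZ F₂ w
        = (if w = x then 1 else 0) - (if w = v then 1 else 0) := by
      intro w
      rw [h1bal w, hbalF' w]
      ring
    obtain ⟨l₂, h2h, h2l, h2arcs, _⟩ := extractWalk hirr v F₂.ncard F₂ le_rfl
      (fun e he => hFarc e he.1) x
      (fun _ => by rw [hbalF₂ x, if_pos rfl, if_neg hxv]; norm_num)
      (fun w hwx hwv => by rw [hbalF₂ w, if_neg hwx, if_neg hwv]; norm_num)
    -- dedup both walks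
    obtain ⟨p, hp1, hp2, hp3, hp4, _⟩ := dedupWalk l₁.length l₁ le_rfl h1h h1l
    obtain ⟨q, hq1, hq2, hq3, hq4, _⟩ := dedupWalk l₂.length l₂ le_rfl h2h h2l
    refine ⟨p, q, ⟨hp1, hp2, hp3, (chain'_iff_pathArcs p).mpr fun e he =>
        hFarc e (h1arcs e (hp4 e he))⟩,
      ⟨hq1, hq2, hq3, (chain'_iff_pathArcs q).mpr fun e he =>
        hFarc e ((h2arcs e (hq4 e he)).1)⟩, ?_⟩
    intro e hep heq
    exact (h2arcs e (hq4 e heq)).2 (hp4 e hep)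
  · -- cut case : derive a contradiction
    exfalso
    set Sr : Set V := {y | ReflTransGen R x y} with hSr
    have hxSr : x ∈ Sr := ReflTransGen.refl
    have hvSr : v ∉ Sr := hres
    have hDcross : ∀ c d, Arc c d → c ∈ Sr → d ∉ Sr → (c, d) ∈ pathArcs P := by
      intro c d hcd hcS hdS
      by_contra hnp
      exact hdS (ReflTransGen.tail hcS (Or.inl ⟨hcd, hnp⟩))
    have hmono : ∀ e ∈ pathArcs P, e.1 ∉ Sr → e.2 ∉ Sr := by
      rintro ⟨a, b⟩ he ha hb
      exact ha (ReflTransGen.tail hb (Or.inr he))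
    obtain ⟨estar, hestar, hes1, hes2⟩ := exists_cross_list P hPh hPl hxSr hvSr
    have hcontra := h estar
    obtain ⟨s, t, ⟨hst, hne⟩, hsS, htS⟩ := cross hcontra hxSr hvSr
    have : (s, t) ∈ pathArcs P := hDcross s t hst hsS htS
    exact hne (cross_unique P hmono this hestar hsS htS hes1 hes2)

theorem easyMenger {Arc : V → V → Prop} {u v : V} (h : TwoReaches Arc u v) (f : V × V) :
    ReflTransGen (fun a b => Arc a b ∧ (a, b) ≠ f) u v := by
  obtain ⟨p, q, ⟨hp1, hp2, _, hpc⟩, ⟨hq1, hq2, _, hqc⟩, hdisj⟩ := h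
  by_cases hf : f ∈ pathArcs p
  · refine reachOfChain q hq1 hq2 ((chain'_iff_pathArcs q).mpr fun e he =>
      ⟨(chain'_iff_pathArcs q).mp hqc e he, fun hef => (hdisj f hf) (hef ▸ he)⟩)
  · refine reachOfChain p hp1 hp2 ((chain'_iff_pathArcs p).mpr fun e he =>
      ⟨(chain'_iff_pathArcs p).mp hpc e he, fun hef => hf (hef ▸ he)⟩)

/-- The key propagation step for uniqueness. -/

theorem uniq_step {Arc : V → V → Prop} {v : V} {U : Set V}
    (hsc : ∀ a b : V, ReflTransGen Arc a b)
    (hUreach : ∀ u ∈ U, ∀ f : V × V,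
      ReflTransGen (fun a b => Arc a b ∧ (a, b) ≠ f) u v)
    (hMeng : ∀ z, z ∉ U →
      ∃ f : V × V, ¬ ReflTransGen (fun a b => Arc a b ∧ (a, b) ≠ f) z v)
    {a₁ b₁ : V} (hb₁ : b₁ ∈ U)
    {z z' : V} (hz' : z' ∉ U)
    (hzS : ¬ ReflTransGen (fun a b => Arc a b ∧ (a, b) ≠ (a₁, b₁)) z v)
    (hor : Arc z z' ∨ Arc z' z) :
    ¬ ReflTransGen (fun a b => Arc a b ∧ (a, b) ≠ (a₁, b₁)) z' v := by
  intro hre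
  rcases hor with hzz' | hz'z
  · exact hzS (ReflTransGen.head
      ⟨hzz', fun h => hz' (by have hzb : z' = b₁ := congrArg Prod.snd h; exact hzb ▸ hb₁)⟩ hre)
  · obtain ⟨g, hg⟩ := hMeng z' hz'
    have hgf : g ≠ (a₁, b₁) := fun h => hg (h ▸ hre)
    have hgzz : g ≠ (z', z) := by
      intro h; subst h
      exact hg (ReflTransGen.mono (r := fun a b => (Arc a b ∧ (a, b) ≠ (a₁, b₁)) ∧ (a, b) ≠ (z', z)) (p := fun a b => Arc a b ∧ (a, b) ≠ (z', z)) (fun a b hab => ⟨hab.1.1, hab.2⟩) _ _ (firstUse hzS z' hre))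
    obtain ⟨g1, g2⟩ := g
    have hzg : ¬ ReflTransGen (fun a b => Arc a b ∧ (a, b) ≠ (g1, g2)) z v :=
      fun hr => hg (ReflTransGen.head ⟨hz'z, fun h => hgzz h.symm⟩ hr)
    by_cases hg2 : ReflTransGen (fun a b => Arc a b ∧ (a, b) ≠ (a₁, b₁)) g2 v
    · -- Case B : g2 ∉ S₁
      obtain ⟨s, t, hst, hsX, htX⟩ := cross
        (X := {w | ¬ ReflTransGen (fun a b => Arc a b ∧ (a, b) ≠ (a₁, b₁)) w v}
          ∩ {w | ¬ ReflTransGen (fun a b => Arc a b ∧ (a, b) ≠ (g1, g2)) w v})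
        (hsc z v) ⟨hzS, hzg⟩
        (fun hv => hv.1 ReflTransGen.refl)
      by_cases htS1 : ReflTransGen (fun a b => Arc a b ∧ (a, b) ≠ (a₁, b₁)) t v
      · -- t ∉ S₁ : crossing arc is (a₁, b₁)
        have hstf : (s, t) = (a₁, b₁) := by
          by_contra hne2
          exact hsX.1 (ReflTransGen.head ⟨hst, hne2⟩ htS1)
        have hs1 : s = a₁ := congrArg Prod.fst hstf
        have ht1 : t = b₁ := congrArg Prod.snd hstf
        subst hs1; subst ht1
        have hb₁g : ReflTransGen (fun a b => Arc a b ∧ (a, b) ≠ (g1, g2)) t v :=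
          hUreach t hb₁ (g1, g2)
        have : (s, t) = (g1, g2) := by
          by_contra hne2
          exact hsX.2 (ReflTransGen.head ⟨hst, hne2⟩ hb₁g)
        exact hgf (hstf ▸ this).symm
      · -- t ∈ S₁, so t ∉ Sg : crossing arc is g
        have htSg : ReflTransGen (fun a b => Arc a b ∧ (a, b) ≠ (g1, g2)) t v := by
          rcases not_and_or.mp htX with h1 | h2
          · exact absurd (not_not.mp h1) htS1
          · exact not_not.mp h2
        have hstg : (s, t) = (g1, g2) := by
          by_contra hne2
          exact hsX.2 (ReflTransGen.head ⟨hst, hne2⟩ htSg)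
        have ht2 : t = g2 := congrArg Prod.snd hstg
        exact htS1 (ht2 ▸ hg2)
    · -- Case A : g2 ∈ S₁ ; the union is closed
      have hclosed : ∀ s t,
          s ∈ ({w | ¬ ReflTransGen (fun a b => Arc a b ∧ (a, b) ≠ (a₁, b₁)) w v}
            ∪ {w | ¬ ReflTransGen (fun a b => Arc a b ∧ (a, b) ≠ (g1, g2)) w v} : Set V) →
          (fun a b => Arc a b ∧ (a, b) ≠ (a₁, b₁)) s t →
          t ∈ ({w | ¬ ReflTransGen (fun a b => Arc a b ∧ (a, b) ≠ (a₁, b₁)) w v}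
            ∪ {w | ¬ ReflTransGen (fun a b => Arc a b ∧ (a, b) ≠ (g1, g2)) w v} : Set V) := by
        rintro s t (hs | hs) ⟨harc, hne2⟩
        · exact Or.inl (fun hrt => hs (ReflTransGen.head ⟨harc, hne2⟩ hrt))
        · by_cases hstg : (s, t) = (g1, g2)
          · have ht2 : t = g2 := congrArg Prod.snd hstg
            exact Or.inl (ht2 ▸ hg2)
          · exact Or.inr (fun hrt => hs (ReflTransGen.head ⟨harc, hstg⟩ hrt))
      have hv := reachClosed hclosed hre (Or.inr hg)
      rcases hv with hv | hv
      · exact hv ReflTransGen.refl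
      · exact hv ReflTransGen.refl

end StmtAux

open Relation StmtAux

/-- In a strongly connected orientation, if `U` is the set of vertices that two-reach a
vertex `v`, then every connected component of `G[V ∖ U]` has exactly one arc into `U`. -/
theorem stmt_11 {V : Type*} [Fintype V] (G : SimpleGraph V) (D : GraphOrientation G)
    (hsc : ∀ u v : V, Relation.ReflTransGen D.arc u v) (v : V)
    (U : Set V) (hU : U = {u | TwoReaches D.arc u v})
    (C : Set V) (hC : IsCompOf G Uᶜ C) :
    ∃! ab : V × V, ab.1 ∈ C ∧ ab.2 ∈ U ∧ D.arc ab.1 ab.2 := by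
  classical
  obtain ⟨x₀, hx₀U, hCdef⟩ := hC
  have hirr : ∀ a, ¬ D.arc a a := fun a ha =>
    G.irrefl ((D.adj_iff a a).mpr (Or.inl ha))
  have hvU : v ∈ U := by
    rw [hU]
    exact ⟨[v], [v], ⟨rfl, rfl, by simp, by simp [List.Chain']⟩, ⟨rfl, rfl, by simp, by simp [List.Chain']⟩,
      by simp [pathArcs]⟩
  have hCU : ∀ y ∈ C, y ∈ Uᶜ := by
    intro y hy
    rw [hCdef] at hy
    exact reachClosed (fun s t _ hst => hst.2.1) hy hx₀U
  have hCclosed : ∀ z w, z ∈ C → w ∈ Uᶜ → G.Adj z w → w ∈ C := by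
    intro z w hz hw hadj
    rw [hCdef] at hz ⊢
    exact ReflTransGen.tail hz ⟨hCU z (hCdef ▸ hz), hw, hadj⟩
  have hx₀C : x₀ ∈ C := by rw [hCdef]; exact ReflTransGen.refl
  -- existence
  have hex : ∀ z : V, ReflTransGen D.arc z v → z ∈ C →
      ∃ st : V × V, st.1 ∈ C ∧ st.2 ∈ U ∧ D.arc st.1 st.2 := by
    intro z hr
    induction hr using ReflTransGen.head_induction_on with
    | refl => exact fun hz => absurd hvU (hCU v hz)
    | @head a b hab hbv ih =>
      intro ha
      by_cases hbU : b ∈ U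
      · exact ⟨(a, b), ha, hbU, hab⟩
      · exact ih (hCclosed a b ha hbU ((D.adj_iff a b).mpr (Or.inl hab)))
  obtain ⟨st, hst1, hst2, hst3⟩ := hex x₀ (hsc x₀ v) hx₀C
  -- menger facts
  have hUreach : ∀ u ∈ U, ∀ f : V × V,
      ReflTransGen (fun a b => D.arc a b ∧ (a, b) ≠ f) u v := by
    intro u hu f
    rw [hU] at hu
    exact easyMenger hu f
  have hMeng : ∀ z, z ∉ U →
      ∃ f : V × V, ¬ ReflTransGen (fun a b => D.arc a b ∧ (a, b) ≠ f) z v := by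
    intro z hzU
    by_contra hall
    push_neg at hall
    refine hzU ?_
    rw [hU]
    exact hardMenger D.asymm hirr hall
  -- pairwise uniqueness
  have key : ∀ a₁ b₁ a₂ b₂ : V, a₁ ∈ C → b₁ ∈ U → D.arc a₁ b₁ →
      a₂ ∈ C → b₂ ∈ U → D.arc a₂ b₂ → (a₁, b₁) = (a₂, b₂) := by
    intro a₁ b₁ a₂ b₂ ha₁ hb₁ harc1 ha₂ hb₂ harc2
    by_contra hne
    -- the cut arc of a₁ is (a₁, b₁)
    have hS1 : ¬ ReflTransGen (fun a b => D.arc a b ∧ (a, b) ≠ (a₁, b₁)) a₁ v := by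
      obtain ⟨g, hg⟩ := hMeng a₁ (hCU a₁ ha₁)
      have : g = (a₁, b₁) := by
        by_contra hgne
        exact hg (ReflTransGen.head ⟨harc1, fun h => hgne h.symm⟩ (hUreach b₁ hb₁ g))
      exact this ▸ hg
    -- a₂ is not in S₁
    have ha₂S1 : ¬ ¬ ReflTransGen (fun a b => D.arc a b ∧ (a, b) ≠ (a₁, b₁)) a₂ v := by
      intro hS
      exact hS (ReflTransGen.head ⟨harc2, fun h => hne h.symm⟩
        (hUreach b₂ hb₂ (a₁, b₁)))
    -- propagate S₁ along the component from a₁ to a₂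
    have hsymmRel : Symmetric (fun a b : V => a ∈ Uᶜ ∧ b ∈ Uᶜ ∧ G.Adj a b) :=
      fun a b ⟨h1, h2, h3⟩ => ⟨h2, h1, h3.symm⟩
    have hreachIn : ReachIn G Uᶜ a₁ a₂ := by
      have h1 : ReachIn G Uᶜ x₀ a₁ := by rw [hCdef] at ha₁; exact ha₁
      have h2 : ReachIn G Uᶜ x₀ a₂ := by rw [hCdef] at ha₂; exact ha₂
      exact ReflTransGen.trans (@Std.Symm.symm _ _ (@ReflTransGen.stdSymm _ _ ⟨fun a b h => hsymmRel h⟩) _ _ h1) h2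
    have hprop : ∀ w : V, ReachIn G Uᶜ a₁ w →
        ¬ ReflTransGen (fun a b => D.arc a b ∧ (a, b) ≠ (a₁, b₁)) w v := by
      intro w hw
      induction hw with
      | refl => exact hS1
      | @tail m c hm hmc ih =>
        refine uniq_step hsc hUreach hMeng hb₁ hmc.2.1 ih ?_
        rcases (D.adj_iff m c).mp hmc.2.2 with h | h
        · exact Or.inl h
        · exact Or.inr h
    exact ha₂S1 (hprop a₂ hreachIn)
  refine ⟨st, ⟨hst1, hst2, hst3⟩, ?_⟩
  rintro ⟨y1, y2⟩ ⟨hy1, hy2, hy3⟩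
  have := key y1 y2 st.1 st.2 hy1 hy2 hy3 hst1 hst2 hst3
  simpa using this
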